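/- In every stochastic game, for every ε > 0, every player i ∈ I has a subgame ε-maxmin strategy; that is, a strategy σ*_i such that for every history h ∈ H and every strategy profile σ_{-i} of the opponents, E_{h,σ*_i,σ_{-i}}[f_i] ≥ v_i(h) − ε. -/

import Mathlib

open scoped ENNReal NNReal Classical

/-- A multiplayer stochastic game: a nonempty finite set of players `I`, a nonempty
countable set of states `S`, nonempty finite action sets `A i`, a transition function
`trans` and bounded Borel payoff functions `payoff i` on runs. -/
structure StochGame where
  I : Type
  S : Type
  A : I → Type
  [fintypeI : Fintype I]
  [nonemptyI : Nonempty I]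
  [countableS : Countable S]
  [nonemptyS : Nonempty S]
  [fintypeA : ∀ i, Fintype (A i)]
  [nonemptyA : ∀ i, Nonempty (A i)]
  trans : S → (∀ i, A i) → PMF S
  payoff : I → S × (ℕ → (∀ i, A i) × S) → ℝ

open MeasureTheory

attribute [instance] StochGame.fintypeI StochGame.nonemptyI StochGame.countableS
  StochGame.nonemptyS StochGame.fintypeA StochGame.nonemptyA

namespace StochGame

variable (G : StochGame)

noncomputable instance : DecidableEq G.I := Classical.decEq _

noncomputable instance (i : G.I) : DecidableEq (G.A i) := Classical.decEq _

/-- Action profiles. -/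
abbrev ActionProfile := ∀ i, G.A i

/-- Runs `(s¹,a¹,s²,a²,…)`, encoded as an initial state together with a sequence of
(action profile, next state) pairs. -/
abbrev Run := G.S × (ℕ → G.ActionProfile × G.S)

/-- Histories `(s¹,a¹,…,s^n)`, encoded as an initial state together with a finite list of
(action profile, next state) pairs. -/
abbrev History := G.S × List (G.ActionProfile × G.S)

instance : MeasurableSpace G.S := ⊤
instance : MeasurableSpace G.ActionProfile := ⊤

variable {G}

/-- The final state `s_h` of a history. -/
def lastState (h : G.History) : G.S := h.2.getLast?.elim h.1 Prod.snd

/-- The stage (length) of a history: a history `(s¹,a¹,…,s^n)` is in stage `n`. -/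
def stage (h : G.History) : ℕ := h.2.length + 1

/-- The history obtained by appending one action profile and one state. -/
def snocH (h : G.History) (a : G.ActionProfile) (s : G.S) : G.History :=
  (h.1, h.2 ++ [(a, s)])

/-- The history obtained by appending a finite list of (action profile, state) pairs. -/
def catH (h : G.History) (l : List (G.ActionProfile × G.S)) : G.History := (h.1, h.2 ++ l)

/-- The history in stage 1 consisting of the initial state `s` only. -/
def initH (G : StochGame) (s : G.S) : G.History := (s, [])

/-- All transitions along the list have positive probability when starting from `s`. -/
def ValidFrom (G : StochGame) : G.S → List (G.ActionProfile × G.S) → Prop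
  | _, [] => True
  | s, (a, t) :: l => G.trans s a t ≠ 0 ∧ ValidFrom G t l

/-- A history belongs to the set `H` of histories of the game iff all its transitions have
positive probability. -/
def Valid (h : G.History) : Prop := ValidFrom G h.1 h.2

/-- `Ext h h'` means that the history `h'` extends the history `h` (possibly `h = h'`),
written `h ⪯ h'` in the paper. -/
def Ext (h h' : G.History) : Prop := h.1 = h'.1 ∧ h.2 <+: h'.2

/-- A behavior strategy of player `i`: a mixed action at every history. -/
abbrev Strategy (G : StochGame) (i : G.I) := G.History → PMF (G.A i)

/-- A strategy profile: one behavior strategy for each player. -/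
abbrev Profile (G : StochGame) := ∀ i, G.Strategy i

/-- The probability, under the strategy profile `σ`, that after the history `h` play continues
exactly along the finite continuation `l`. -/
noncomputable def contProb (σ : G.Profile) : G.History → List (G.ActionProfile × G.S) → ℝ≥0∞
  | _, [] => 1
  | h, (a, s) :: l =>
      (∏ i, σ i h (a i)) * G.trans (lastState h) a s * contProb σ (snocH h a s) l

/-- The cylinder set `C(h)` of all runs extending the history `h`. -/
def cyl (h : G.History) : Set G.Run :=
  {r | r.1 = h.1 ∧ ∀ k, (hk : k < h.2.length) → r.2 k = h.2.get ⟨k, hk⟩}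

/-- `P` is the family of probability measures `P_{h,σ}` on runs induced, via the
Ionescu-Tulcea/Kolmogorov extension, by a history `h` and a strategy profile `σ`:
each `P h σ` is a probability measure, and the measure of the cylinder set of any finite
extension of `h` is the product of the transition probabilities prescribed by `σ` and `p`.
(These properties determine `P h σ` uniquely, since `P h σ (cyl h) = 1`.) -/
def IsInducedFamily (G : StochGame) (P : G.History → G.Profile → Measure G.Run) : Prop :=
  (∀ h σ, IsProbabilityMeasure (P h σ)) ∧
    ∀ (h : G.History) (σ : G.Profile) (l : List (G.ActionProfile × G.S)),
      P h σ (cyl (catH h l)) = contProb σ h l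

/-- The expected payoff `E_{h,σ}[f_i]` of player `i` in the subgame at `h` under `σ`. -/
noncomputable def expPay (P : G.History → G.Profile → Measure G.Run) (h : G.History)
    (σ : G.Profile) (i : G.I) : ℝ :=
  ∫ r, G.payoff i r ∂(P h σ)

/-- The minmax value `v̄_i(h)` of player `i` at the history `h`. -/
noncomputable def minmaxVal (P : G.History → G.Profile → Measure G.Run) (i : G.I)
    (h : G.History) : ℝ :=
  ⨅ σ : G.Profile, ⨆ τ : G.Strategy i, expPay P h (Function.update σ i τ) i

/-- The maxmin value `v̲_i(h)` of player `i` at the history `h`. -/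
noncomputable def maxminVal (P : G.History → G.Profile → Measure G.Run) (i : G.I)
    (h : G.History) : ℝ :=
  ⨆ τ : G.Strategy i, ⨅ σ : G.Profile, expPay P h (Function.update σ i τ) i

/-- `E[D | h, x]`: the expected value of `D` at the next history, when at history `h` the
players use the mixed action profile `x` and the next state is drawn according to `p`. -/
noncomputable def oneShotExp (D : G.History → ℝ) (h : G.History) (x : ∀ i, PMF (G.A i)) : ℝ :=
  ∑ a : G.ActionProfile, (∏ i, (x i (a i)).toReal) *
    ∑' s : G.S, (G.trans (lastState h) a s).toReal * D (snocH h a s)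

/-- The minmax value `v̄_{O,i}(D,h)` of player `i` in the one-shot game `G_O(D,h)`. -/
noncomputable def oneShotMinmax (D : G.History → ℝ) (i : G.I) (h : G.History) : ℝ :=
  ⨅ x : ∀ j, PMF (G.A j), ⨆ y : PMF (G.A i), oneShotExp D h (Function.update x i y)

/-- The maxmin value `v̲_{O,i}(D,h)` of player `i` in the one-shot game `G_O(D,h)`. -/
noncomputable def oneShotMaxmin (D : G.History → ℝ) (i : G.I) (h : G.History) : ℝ :=
  ⨆ y : PMF (G.A i), ⨅ x : ∀ j, PMF (G.A j), oneShotExp D h (Function.update x i y)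

end StochGame

namespace StochGame

-- AUX START
section Aux

variable {G : StochGame}

lemma ext_refl (h : G.History) : Ext h h := ⟨rfl, List.prefix_refl _⟩

lemma ext_trans {h₁ h₂ h₃ : G.History} (h12 : Ext h₁ h₂) (h23 : Ext h₂ h₃) : Ext h₁ h₃ :=
  ⟨h12.1.trans h23.1, h12.2.trans h23.2⟩

lemma cyl_mono {h₁ h₂ : G.History} (hext : Ext h₁ h₂) : cyl h₂ ⊆ cyl h₁ := by
  obtain ⟨s2, l2⟩ := h₂
  rintro r ⟨hr1, hr2⟩
  obtain ⟨hroot, t, ht⟩ : h₁.1 = s2 ∧ ∃ t, h₁.2 ++ t = l2 := ⟨hext.1, hext.2⟩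
  subst ht
  refine ⟨hr1.trans hroot.symm, ?_⟩
  intro k hk
  have hk2 : k < (h₁.2 ++ t).length := by
    simp only [List.length_append]; omega
  rw [hr2 k hk2]
  simp only [List.get_eq_getElem]
  exact List.getElem_append_left hk

lemma compat_of_mem_cyl {h₁ h₂ : G.History} {r : G.Run}
    (hr1 : r ∈ cyl h₁) (hr2 : r ∈ cyl h₂) : Ext h₁ h₂ ∨ Ext h₂ h₁ := by
  have key : ∀ g₁ g₂ : G.History, g₁.2.length ≤ g₂.2.length →
      r ∈ cyl g₁ → r ∈ cyl g₂ → Ext g₁ g₂ := by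
    rintro g₁ g₂ hlen ⟨ha1, hb1⟩ ⟨ha2, hb2⟩
    refine ⟨ha1 ▸ ha2, ?_⟩
    rw [List.prefix_iff_eq_take]
    apply List.ext_get
    · simp [Nat.min_eq_left hlen]
    · intro k hk1 hk2
      have hk1' : k < g₁.2.length := hk1
      have hkg2 : k < g₂.2.length := lt_of_lt_of_le hk1' hlen
      simp only [List.get_eq_getElem, List.getElem_take]
      have e1 := hb1 k hk1'
      have e2 := hb2 k hkg2
      simp only [List.get_eq_getElem] at e1 e2
      rw [← e1]
      exact e2
  rcases le_total h₁.2.length h₂.2.length with hle | hle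
  · exact Or.inl (key _ _ hle hr1 hr2)
  · exact Or.inr (key _ _ hle hr2 hr1)

lemma cyl_disjoint {h₁ h₂ : G.History} (hcompat : ¬ (Ext h₁ h₂ ∨ Ext h₂ h₁)) :
    Disjoint (cyl h₁) (cyl h₂) := by
  rw [Set.disjoint_left]
  intro r hr1 hr2
  exact hcompat (compat_of_mem_cyl hr1 hr2)

lemma cyl_inter_of_ext {h₁ h₂ : G.History} (hext : Ext h₁ h₂) :
    cyl h₁ ∩ cyl h₂ = cyl h₂ :=
  Set.inter_eq_self_of_subset_right (cyl_mono hext)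


/-- The collection of all cylinder sets. -/
def cylSets (G : StochGame) : Set (Set G.Run) := Set.range fun h : G.History => cyl h

instance : Countable G.History := by
  unfold StochGame.History
  infer_instance

lemma measurableSet_cyl (h : G.History) : MeasurableSet (cyl h) := by
  have : cyl h = (Prod.fst ⁻¹' {h.1}) ∩
      ⋂ k : Fin h.2.length, {r : G.Run | r.2 k.1 = h.2.get k} := by
    ext r
    simp only [cyl, Set.mem_setOf_eq, Set.mem_inter_iff, Set.mem_preimage,
      Set.mem_singleton_iff, Set.mem_iInter]
    refine and_congr Iff.rfl ⟨fun H k => H k.1 k.2, fun H k hk => H ⟨k, hk⟩⟩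
  rw [this]
  refine MeasurableSet.inter (measurable_fst MeasurableSpace.measurableSet_top) (MeasurableSet.iInter fun k => ?_)
  have : {r : G.Run | r.2 k.1 = h.2.get k} = (fun r : G.Run => r.2 k.1) ⁻¹' {h.2.get k} := rfl
  rw [this]
  exact ((measurable_pi_apply k.1).comp measurable_snd)
    (by rw [← Set.singleton_prod_singleton]; exact MeasurableSet.prod MeasurableSpace.measurableSet_top MeasurableSpace.measurableSet_top)

lemma cyl_init (s : G.S) : cyl ((s, []) : G.History) = Prod.fst ⁻¹' {s} := by
  ext r; simp [cyl]

lemma coord_eq_iUnion (n : ℕ) (e : G.ActionProfile × G.S) :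
    {r : G.Run | r.2 n = e} = ⋃ s : G.S, ⋃ l : {l : List (G.ActionProfile × G.S) // l.length = n},
      cyl ((s, l.1 ++ [e]) : G.History) := by
  ext r
  simp only [Set.mem_setOf_eq, Set.mem_iUnion]
  constructor
  · intro hr
    refine ⟨r.1, ⟨List.ofFn (fun j : Fin n => r.2 j.1), by simp⟩, rfl, ?_⟩
    intro k hk
    simp only [List.length_append, List.length_ofFn, List.length_singleton] at hk
    simp only [List.get_eq_getElem]
    rcases lt_or_ge k n with hkn | hkn
    · rw [List.getElem_append_left (by simpa using hkn)]
      simp [List.getElem_ofFn]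
    · have hk' : k = n := by omega
      subst hk'
      rw [List.getElem_concat_length (by simp)]
      exact hr
  · rintro ⟨s, l, hr1, hr2⟩
    have hk : l.1.length < (l.1 ++ [e]).length := by simp
    have := hr2 l.1.length hk
    simp only [List.get_eq_getElem] at this
    rw [List.getElem_concat_length rfl] at this
    rwa [l.2] at this

lemma generateFrom_cylSets (G : StochGame) :
    (inferInstance : MeasurableSpace G.Run) = MeasurableSpace.generateFrom (cylSets G) := by
  set m' := MeasurableSpace.generateFrom (cylSets G) with hm'
  have hcyl : ∀ h : G.History, MeasurableSet[m'] (cyl h) := fun h =>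
    MeasurableSpace.measurableSet_generateFrom ⟨h, rfl⟩
  have claimA : ∀ B : Set G.S, MeasurableSet[m'] (Prod.fst ⁻¹' B) := by
    intro B
    have : Prod.fst ⁻¹' B = ⋃ s ∈ B, cyl ((s, []) : G.History) := by
      ext r; simp [cyl_init]
    rw [this]
    exact MeasurableSet.biUnion B.to_countable fun s _ => hcyl _
  have claimB : ∀ (n : ℕ) (Bp : Set (G.ActionProfile × G.S)),
      MeasurableSet[m'] ((fun r : G.Run => r.2 n) ⁻¹' Bp) := by
    intro n Bp
    have : (fun r : G.Run => r.2 n) ⁻¹' Bp = ⋃ e ∈ Bp, {r : G.Run | r.2 n = e} := by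
      ext r; simp
    rw [this]
    refine MeasurableSet.biUnion Bp.to_countable fun e _ => ?_
    rw [coord_eq_iUnion]
    exact MeasurableSet.iUnion fun s => MeasurableSet.iUnion fun l => hcyl _
  refine le_antisymm ?_ (MeasurableSpace.generateFrom_le ?_)
  · show (MeasurableSpace.comap Prod.fst inferInstance ⊔
      MeasurableSpace.comap Prod.snd MeasurableSpace.pi) ≤ m'
    refine sup_le ?_ ?_
    · rintro s hs
      obtain ⟨B, _, rfl⟩ := MeasurableSpace.measurableSet_comap.mp hs
      exact claimA B
    · rw [MeasurableSpace.comap_le_iff_le_map]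
      show MeasurableSpace.pi ≤ _
      refine iSup_le fun n => ?_
      rw [MeasurableSpace.comap_le_iff_le_map]
      intro Bp _
      show MeasurableSet[m'] (Prod.snd ⁻¹' ((fun f : ℕ → G.ActionProfile × G.S => f n) ⁻¹' Bp))
      exact claimB n Bp
  · rintro t ⟨h, rfl⟩
    exact measurableSet_cyl h

lemma isPiSystem_cylSets (G : StochGame) : IsPiSystem (cylSets G) := by
  rintro _ ⟨h₁, rfl⟩ _ ⟨h₂, rfl⟩ hne
  obtain ⟨r, hr1, hr2⟩ := hne
  rcases compat_of_mem_cyl hr1 hr2 with hext | hext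
  · rw [cyl_inter_of_ext hext]; exact ⟨h₂, rfl⟩
  · rw [Set.inter_comm, cyl_inter_of_ext hext]; exact ⟨h₁, rfl⟩

lemma measure_ext_cyl {μ ν : Measure G.Run} [IsFiniteMeasure μ]
    (hc : ∀ h : G.History, μ (cyl h) = ν (cyl h)) (hu : μ Set.univ = ν Set.univ) : μ = ν := by
  refine MeasureTheory.ext_of_generate_finite _ (generateFrom_cylSets G)
    (isPiSystem_cylSets G) ?_ hu
  rintro _ ⟨h, rfl⟩
  exact hc h


@[simp] lemma catH_nil (h : G.History) : catH h [] = h := by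
  simp [catH]

lemma catH_cons (h : G.History) (a : G.ActionProfile) (s : G.S)
    (l : List (G.ActionProfile × G.S)) :
    catH h ((a, s) :: l) = catH (snocH h a s) l := by
  simp [catH, snocH]

lemma catH_catH (h : G.History) (l₁ l₂ : List (G.ActionProfile × G.S)) :
    catH (catH h l₁) l₂ = catH h (l₁ ++ l₂) := by
  simp [catH]

lemma ext_catH (h : G.History) (l : List (G.ActionProfile × G.S)) : Ext h (catH h l) :=
  ⟨rfl, l, rfl⟩

lemma ext_iff_catH {h h₂ : G.History} : Ext h h₂ ↔ ∃ l, h₂ = catH h l := by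
  constructor
  · rintro ⟨h1, t, h2⟩
    exact ⟨t, Prod.ext h1.symm h2.symm⟩
  · rintro ⟨l, rfl⟩
    exact ext_catH h l

lemma contProb_append (σ : G.Profile) (h : G.History)
    (l₁ l₂ : List (G.ActionProfile × G.S)) :
    contProb σ h (l₁ ++ l₂) = contProb σ h l₁ * contProb σ (catH h l₁) l₂ := by
  induction l₁ generalizing h with
  | nil => simp [contProb]
  | cons e l₁ ih =>
    obtain ⟨a, s⟩ := e
    simp only [List.cons_append, contProb, catH_cons, List.append_eq]
    rw [ih (snocH h a s)]; ring

lemma contProb_congr {σ₁ σ₂ : G.Profile} {h : G.History}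
    {l : List (G.ActionProfile × G.S)}
    (hag : ∀ (j : G.I) (l' : List (G.ActionProfile × G.S)), l' <+: l → l' ≠ l →
      σ₁ j (catH h l') = σ₂ j (catH h l')) :
    contProb σ₁ h l = contProb σ₂ h l := by
  induction l generalizing h with
  | nil => simp [contProb]
  | cons e l ih =>
    obtain ⟨a, s⟩ := e
    simp only [contProb]
    have h0 : ∀ j, σ₁ j h = σ₂ j h := by
      intro j
      have := hag j [] ⟨(a, s) :: l, rfl⟩ (by simp)
      simpa using this
    have hrec : contProb σ₁ (snocH h a s) l = contProb σ₂ (snocH h a s) l := by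
      refine ih ?_
      intro j l' hpre hne
      have h1 : catH (snocH h a s) l' = catH h ((a, s) :: l') := (catH_cons _ _ _ _).symm
      rw [h1]
      refine hag j ((a, s) :: l') ?_ (by simpa using hne)
      obtain ⟨t, ht⟩ := hpre
      exact ⟨t, by rw [List.cons_append, ht]⟩
    rw [hrec]
    congr 2
    exact Finset.prod_congr rfl fun j _ => by rw [h0 j]

lemma contProb_le_one (σ : G.Profile) (h : G.History)
    (l : List (G.ActionProfile × G.S)) : contProb σ h l ≤ 1 := by
  induction l generalizing h with
  | nil => simp [contProb]
  | cons e l ih =>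
    obtain ⟨a, s⟩ := e
    simp only [contProb]
    refine mul_le_one' (mul_le_one' ?_ ?_) (ih _)
    · exact Finset.prod_le_one (fun _ _ => zero_le) (fun j _ => PMF.coe_le_one _ _)
    · exact PMF.coe_le_one _ _

lemma contProb_ne_top (σ : G.Profile) (h : G.History)
    (l : List (G.ActionProfile × G.S)) : contProb σ h l ≠ ∞ :=
  ne_top_of_le_ne_top ENNReal.one_ne_top (contProb_le_one σ h l)


instance (i : G.I) : Nonempty (G.Strategy i) :=
  ⟨fun _ => PMF.pure (Classical.arbitrary _)⟩

instance : Nonempty G.Profile :=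
  ⟨fun _ _ => PMF.pure (Classical.arbitrary _)⟩

/-- The guarantee of strategy `τ` of player `i` at history `h`. -/
noncomputable def guar (P : G.History → G.Profile → Measure G.Run) (i : G.I)
    (τ : G.Strategy i) (h : G.History) : ℝ :=
  ⨅ σ : G.Profile, expPay P h (Function.update σ i τ) i

lemma maxminVal_eq (P : G.History → G.Profile → Measure G.Run) (i : G.I) (h : G.History) :
    maxminVal P i h = ⨆ τ : G.Strategy i, guar P i τ h := rfl

lemma le_guar {P : G.History → G.Profile → Measure G.Run} {i : G.I} {τ : G.Strategy i}
    {h : G.History} {a : ℝ}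
    (hall : ∀ σ : G.Profile, a ≤ expPay P h (Function.update σ i τ) i) :
    a ≤ guar P i τ h := le_ciInf hall

lemma exists_expPay_lt {P : G.History → G.Profile → Measure G.Run} {i : G.I}
    {τ : G.Strategy i} {h : G.History} {c : ℝ} (hc : guar P i τ h < c) :
    ∃ σ : G.Profile, expPay P h (Function.update σ i τ) i < c :=
  exists_lt_of_ciInf_lt hc

lemma exists_guar_gt {P : G.History → G.Profile → Measure G.Run} {i : G.I}
    {h : G.History} {δ : ℝ} (hδ : 0 < δ) :
    ∃ τ : G.Strategy i, maxminVal P i h - δ < guar P i τ h := by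
  have h1 : maxminVal P i h - δ < ⨆ τ : G.Strategy i, guar P i τ h := by
    rw [← maxminVal_eq]
    linarith
  exact exists_lt_of_lt_ciSup h1

section Induced

variable {P : G.History → G.Profile → Measure G.Run} (hP : IsInducedFamily G P)

include hP

lemma P_cyl_self (h : G.History) (σ : G.Profile) : P h σ (cyl h) = 1 := by
  have := hP.2 h σ []
  simpa [contProb] using this

lemma P_cyl_prefix {h h₂ : G.History} (hext : Ext h₂ h) (σ : G.Profile) :
    P h σ (cyl h₂) = 1 := by
  haveI := hP.1 h σ
  refine le_antisymm prob_le_one ?_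
  rw [← P_cyl_self hP h σ]
  exact measure_mono (cyl_mono hext)

lemma P_cyl_incompat {h h₂ : G.History} (hnc : ¬(Ext h h₂ ∨ Ext h₂ h)) (σ : G.Profile) :
    P h σ (cyl h₂) = 0 := by
  haveI := hP.1 h σ
  have hdis : Disjoint (cyl h) (cyl h₂) :=
    cyl_disjoint (by tauto)
  have hsub : cyl h₂ ⊆ Set.univ \ cyl h := by
    rw [Set.diff_eq]
    exact Set.subset_inter (Set.subset_univ _) (Set.disjoint_right.mp hdis)
  refine le_antisymm ?_ zero_le
  calc P h σ (cyl h₂) ≤ P h σ (Set.univ \ cyl h) := measure_mono hsub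
    _ = P h σ Set.univ - P h σ (cyl h) := by
        refine measure_diff (Set.subset_univ _) (measurableSet_cyl h).nullMeasurableSet ?_
        exact ne_top_of_le_ne_top ENNReal.one_ne_top (le_of_eq (P_cyl_self hP h σ))
    _ = 0 := by rw [measure_univ, P_cyl_self hP h σ, tsub_self]

lemma P_congr {h : G.History} {σ₁ σ₂ : G.Profile}
    (hagree : ∀ (j : G.I) (h'' : G.History), Ext h h'' → σ₁ j h'' = σ₂ j h'') :
    P h σ₁ = P h σ₂ := by
  haveI := hP.1 h σ₁
  haveI := hP.1 h σ₂
  refine measure_ext_cyl (fun h₂ => ?_) (by simp)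
  by_cases hext : Ext h h₂
  · obtain ⟨l, rfl⟩ := ext_iff_catH.mp hext
    rw [hP.2 h σ₁ l, hP.2 h σ₂ l]
    exact contProb_congr fun j l' _ _ => hagree j (catH h l') (ext_catH h l')
  · by_cases hext2 : Ext h₂ h
    · rw [P_cyl_prefix hP hext2, P_cyl_prefix hP hext2]
    · rw [P_cyl_incompat hP (by tauto), P_cyl_incompat hP (by tauto)]

lemma P_restrict (h : G.History) (σ : G.Profile) (l : List (G.ActionProfile × G.S)) :
    (P h σ).restrict (cyl (catH h l)) = contProb σ h l • P (catH h l) σ := by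
  haveI := hP.1 h σ
  haveI := hP.1 (catH h l) σ
  refine measure_ext_cyl (fun h₂ => ?_) ?_
  · rw [Measure.restrict_apply (measurableSet_cyl h₂), Measure.smul_apply, smul_eq_mul]
    by_cases hext : Ext (catH h l) h₂
    · obtain ⟨t, rfl⟩ := ext_iff_catH.mp hext
      rw [Set.inter_eq_self_of_subset_left (cyl_mono (ext_catH (catH h l) t)),
        hP.2 (catH h l) σ t, catH_catH, hP.2 h σ (l ++ t), contProb_append]
    · by_cases hext2 : Ext h₂ (catH h l)
      · rw [Set.inter_eq_self_of_subset_right (cyl_mono hext2), hP.2 h σ l,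
          P_cyl_prefix hP hext2, mul_one]
      · have hdis : Disjoint (cyl h₂) (cyl (catH h l)) := cyl_disjoint (by tauto)
        rw [Set.disjoint_iff_inter_eq_empty.mp hdis, measure_empty,
          P_cyl_incompat hP (by tauto), mul_zero]
  · rw [Measure.restrict_apply_univ, Measure.smul_apply, smul_eq_mul, measure_univ,
      mul_one, hP.2 h σ l]


omit hP in
lemma _dummy_omit : True := trivial

/-- The continuation list leading from `h` to an extension `h'`. -/
def pathL (h h' : G.History) : List (G.ActionProfile × G.S) := h'.2.drop h.2.length

omit hP in
lemma catH_pathL {h h' : G.History} (hext : Ext h h') : catH h (pathL h h') = h' := by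
  obtain ⟨h1, t, h2⟩ := hext
  refine Prod.ext h1 ?_
  show h.2 ++ (h'.2.drop h.2.length) = h'.2
  rw [← h2, List.drop_left]

omit hP in
lemma integrable_payoff {i : G.I} (hfm : Measurable (G.payoff i))
    {C : ℝ} (hC : ∀ r, |G.payoff i r| ≤ C) {h : G.History} {σ : G.Profile}
    [IsProbabilityMeasure (P h σ)] :
    Integrable (G.payoff i) (P h σ) := by
  refine (integrable_const C).mono' hfm.aestronglyMeasurable ?_
  exact Filter.Eventually.of_forall fun r => by simpa [Real.norm_eq_abs] using hC r

lemma abs_expPay_le {i : G.I} {C : ℝ} (hC : ∀ r, |G.payoff i r| ≤ C)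
    (h : G.History) (σ : G.Profile) : |expPay P h σ i| ≤ C := by
  haveI := hP.1 h σ
  have := MeasureTheory.norm_integral_le_of_norm_le_const (μ := P h σ) (f := G.payoff i) (C := C)
    (Filter.Eventually.of_forall fun r => by simpa [Real.norm_eq_abs] using hC r)
  simpa [expPay, Real.norm_eq_abs, measure_univ] using this

section Guar

variable {i : G.I} {C : ℝ} (hC : ∀ r, |G.payoff i r| ≤ C)

include hC

lemma bddBelow_range_expPay (τ : G.Strategy i) (h : G.History) :
    BddBelow (Set.range fun σ : G.Profile => expPay P h (Function.update σ i τ) i) := by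
  refine ⟨-C, ?_⟩
  rintro x ⟨σ, rfl⟩
  have := abs_le.mp (abs_expPay_le hP hC h (Function.update σ i τ))
  linarith [this.1]

lemma guar_le_expPay (τ : G.Strategy i) (h : G.History) (σ : G.Profile) :
    guar P i τ h ≤ expPay P h (Function.update σ i τ) i :=
  ciInf_le (bddBelow_range_expPay hP hC τ h) σ

lemma abs_guar_le (τ : G.Strategy i) (h : G.History) : |guar P i τ h| ≤ C := by
  rw [abs_le]
  constructor
  · refine le_guar fun σ => ?_
    have := abs_le.mp (abs_expPay_le hP hC h (Function.update σ i τ))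
    linarith [this.1]
  · refine le_trans (guar_le_expPay hP hC τ h (Classical.arbitrary _)) ?_
    have := abs_le.mp (abs_expPay_le hP hC h (Function.update (Classical.arbitrary _) i τ))
    linarith [this.2]

lemma abs_maxminVal_le (h : G.History) : |maxminVal P i h| ≤ C := by
  rw [maxminVal_eq, abs_le]
  constructor
  · refine le_trans ?_ (le_ciSup (f := fun τ : G.Strategy i => guar P i τ h)
      ⟨C, by rintro x ⟨τ, rfl⟩; exact (abs_le.mp (abs_guar_le hP hC τ h)).2⟩
      (Classical.arbitrary _))
    exact (abs_le.mp (abs_guar_le hP hC (Classical.arbitrary _) h)).1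
  · exact ciSup_le fun τ => (abs_le.mp (abs_guar_le hP hC τ h)).2

end Guar

omit hP in
lemma min_le_mul_of_mem01 {W x : ℝ} (h0 : 0 ≤ W) (h1 : W ≤ 1) : min 0 x ≤ W * x := by
  rcases le_or_gt 0 x with hx | hx
  · calc min 0 x ≤ 0 := min_le_left _ _
      _ ≤ W * x := mul_nonneg h0 hx
  · calc min 0 x ≤ x := min_le_right _ _
      _ ≤ W * x := by nlinarith

section Decomp

variable {i : G.I}
variable (h : G.History) (σ : G.Profile) (R : Set G.History)
variable (hRext : ∀ h' ∈ R, Ext h h')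
variable (hRdis : ∀ h₁ ∈ R, ∀ h₂ ∈ R, h₁ ≠ h₂ → ¬(Ext h₁ h₂ ∨ Ext h₂ h₁))

include hRext hRdis

omit hP hRext in
lemma pairwise_cyl_disjoint : Pairwise (Function.onFun Disjoint fun h' : R => cyl h'.1) := by
  intro a b hab
  have : a.1 ≠ b.1 := fun hv => hab (Subtype.ext hv)
  exact cyl_disjoint (hRdis a.1 a.2 b.1 b.2 this)

lemma measure_cyl_union :
    P h σ (⋃ h' ∈ R, cyl h') = ∑' h' : R, contProb σ h (pathL h h'.1) := by
  rw [Set.biUnion_eq_iUnion]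
  rw [MeasureTheory.measure_iUnion (pairwise_cyl_disjoint R hRdis)
    (fun h' => measurableSet_cyl h'.1)]
  refine tsum_congr fun h' => ?_
  have hc : cyl h'.1 = cyl (catH h (pathL h h'.1)) := by rw [catH_pathL (hRext h'.1 h'.2)]
  rw [hc, hP.2 h σ (pathL h h'.1)]

lemma summable_weights :
    Summable (fun h' : R => (contProb σ h (pathL h h'.1)).toReal) := by
  haveI := hP.1 h σ
  refine ENNReal.summable_toReal ?_
  rw [← measure_cyl_union hP h σ R hRext hRdis]
  exact ne_top_of_le_ne_top ENNReal.one_ne_top prob_le_one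

lemma tsum_weights_le_one :
    ∑' h' : R, (contProb σ h (pathL h h'.1)).toReal ≤ 1 := by
  haveI := hP.1 h σ
  rw [← ENNReal.tsum_toReal_eq (fun h' => contProb_ne_top σ h _)]
  rw [← measure_cyl_union hP h σ R hRext hRdis]
  have h1 : P h σ (⋃ h' ∈ R, cyl h') ≤ 1 := prob_le_one
  calc (P h σ (⋃ h' ∈ R, cyl h')).toReal ≤ (1 : ℝ≥0∞).toReal :=
        ENNReal.toReal_mono ENNReal.one_ne_top h1
    _ = 1 := by simp

lemma hasSum_decomp (hfm : Measurable (G.payoff i)) {C : ℝ}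
    (hC : ∀ r, |G.payoff i r| ≤ C) :
    HasSum (fun h' : R => (contProb σ h (pathL h h'.1)).toReal * expPay P h'.1 σ i)
      (∫ r in ⋃ h' ∈ R, cyl h', G.payoff i r ∂(P h σ)) := by
  haveI := hP.1 h σ
  have hint : Integrable (G.payoff i) (P h σ) := integrable_payoff hfm hC
  have H := MeasureTheory.hasSum_integral_iUnion (μ := P h σ)
    (s := fun h' : R => cyl h'.1) (fun h' => measurableSet_cyl h'.1)
    (pairwise_cyl_disjoint R hRdis) hint.integrableOn
  have H2 : ∀ h' : R, (∫ x in cyl h'.1, G.payoff i x ∂(P h σ))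
      = (contProb σ h (pathL h h'.1)).toReal * expPay P h'.1 σ i := by
    intro h'
    have e1 : (P h σ).restrict (cyl h'.1)
        = contProb σ h (pathL h h'.1) • P h'.1 σ := by
      rw [← catH_pathL (hRext h'.1 h'.2), P_restrict hP, catH_pathL (hRext h'.1 h'.2)]
    show ∫ x, G.payoff i x ∂((P h σ).restrict (cyl h'.1)) = _
    rw [e1, integral_smul_measure, smul_eq_mul, expPay]
  simp only [H2] at H
  rw [Set.biUnion_eq_iUnion]
  exact H

lemma expPay_eq_decomp (hfm : Measurable (G.payoff i)) {C : ℝ}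
    (hC : ∀ r, |G.payoff i r| ≤ C) :
    expPay P h σ i = (∫ r in (⋃ h' ∈ R, cyl h')ᶜ, G.payoff i r ∂(P h σ))
      + ∑' h' : R, (contProb σ h (pathL h h'.1)).toReal * expPay P h'.1 σ i := by
  haveI := hP.1 h σ
  have hint : Integrable (G.payoff i) (P h σ) := integrable_payoff hfm hC
  have hU : MeasurableSet (⋃ h' ∈ R, cyl h') :=
    MeasurableSet.biUnion (Set.to_countable R) fun h' _ => measurableSet_cyl h'
  have h1 := MeasureTheory.integral_add_compl hU hint
  have h2 := (hasSum_decomp hP h σ R hRext hRdis hfm hC).tsum_eq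
  rw [h2, expPay, ← h1]
  ring

end Decomp


lemma measure_inter_compl_eq (h : G.History) (σ : G.Profile) (R : Set G.History)
    (hRdis : ∀ h₁ ∈ R, ∀ h₂ ∈ R, h₁ ≠ h₂ → ¬(Ext h₁ h₂ ∨ Ext h₂ h₁))
    (h₂ : G.History) (hsub : ∀ h' ∈ R, ¬ Ext h' h₂) :
    P h σ (cyl h₂ ∩ (⋃ h' ∈ R, cyl h')ᶜ)
      = P h σ (cyl h₂) - ∑' h' : {h' // h' ∈ R ∧ Ext h₂ h'}, P h σ (cyl h'.1) := by
  haveI := hP.1 h σ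
  have hset : cyl h₂ ∩ (⋃ h' ∈ R, cyl h') = ⋃ h' : {h' // h' ∈ R ∧ Ext h₂ h'}, cyl h'.1 := by
    ext x
    simp only [Set.mem_inter_iff, Set.mem_iUnion, exists_prop]
    constructor
    · rintro ⟨hx2, h', hR', hx'⟩
      rcases compat_of_mem_cyl hx2 hx' with hext | hext
      · exact ⟨⟨h', hR', hext⟩, hx'⟩
      · exact absurd hext (hsub h' hR')
    · rintro ⟨⟨h', hR', hext⟩, hx'⟩
      exact ⟨cyl_mono hext hx', h', hR', hx'⟩
  have hdisj : Pairwise (Function.onFun Disjoint fun h' : {h' // h' ∈ R ∧ Ext h₂ h'} => cyl h'.1) := by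
    intro a b hab
    have hne : a.1 ≠ b.1 := fun hv => hab (Subtype.ext hv)
    exact cyl_disjoint (hRdis a.1 a.2.1 b.1 b.2.1 hne)
  have hmeasU : ∀ h' : {h' // h' ∈ R ∧ Ext h₂ h'}, MeasurableSet (cyl h'.1) :=
    fun h' => measurableSet_cyl _
  have hUmeas : MeasurableSet (⋃ h' : {h' // h' ∈ R ∧ Ext h₂ h'}, cyl h'.1) :=
    MeasurableSet.iUnion hmeasU
  have h1 : cyl h₂ ∩ (⋃ h' ∈ R, cyl h')ᶜ
      = cyl h₂ \ (⋃ h' : {h' // h' ∈ R ∧ Ext h₂ h'}, cyl h'.1) := by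
    rw [← hset, Set.diff_self_inter, Set.diff_eq]
  rw [h1, measure_diff (by rw [← hset]; exact Set.inter_subset_left)
      hUmeas.nullMeasurableSet (measure_ne_top _ _),
    MeasureTheory.measure_iUnion hdisj hmeasU]

lemma restrict_compl_congr (h : G.History) (R : Set G.History)
    (hRext : ∀ h' ∈ R, Ext h h')
    (hRdis : ∀ h₁ ∈ R, ∀ h₂ ∈ R, h₁ ≠ h₂ → ¬(Ext h₁ h₂ ∨ Ext h₂ h₁))
    {σ₁ σ₂ : G.Profile}
    (hag : ∀ (j : G.I) (h'' : G.History), Ext h h'' → (∀ h' ∈ R, ¬ Ext h' h'') →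
      σ₁ j h'' = σ₂ j h'') :
    (P h σ₁).restrict ((⋃ h' ∈ R, cyl h')ᶜ)
      = (P h σ₂).restrict ((⋃ h' ∈ R, cyl h')ᶜ) := by
  haveI := hP.1 h σ₁
  haveI := hP.1 h σ₂
  have hprefix_ext : ∀ (l' l : List (G.ActionProfile × G.S)), l' <+: l →
      Ext (catH h l') (catH h l) := by
    rintro l' l ⟨t, rfl⟩
    exact ⟨rfl, t, by simp [catH]⟩
  have claim2 : ∀ h' ∈ R, P h σ₁ (cyl h') = P h σ₂ (cyl h') := by
    intro h' hR'
    obtain ⟨l, rfl⟩ := ext_iff_catH.mp (hRext h' hR')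
    rw [hP.2, hP.2]
    refine contProb_congr ?_
    intro j l' hpre hne
    refine hag j (catH h l') (ext_catH h l') ?_
    intro h''' hR3 hext3
    have hlt : (catH h l').2.length < (catH h l).2.length := by
      simp only [catH, List.length_append]
      have h1 := hpre.length_le
      have h2 : l'.length ≠ l.length := fun he => hne (hpre.eq_of_length he)
      omega
    have hne3 : h''' ≠ catH h l := by
      intro he
      have := hext3.2.length_le
      rw [he] at this
      omega
    exact hRdis h''' hR3 (catH h l) hR' hne3
      (Or.inl (ext_trans hext3 (hprefix_ext l' l hpre)))
  have claim1 : ∀ h₂, (∀ h' ∈ R, ¬ Ext h' h₂) → P h σ₁ (cyl h₂) = P h σ₂ (cyl h₂) := by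
    intro h₂ hsub
    by_cases hext : Ext h h₂
    · obtain ⟨l, rfl⟩ := ext_iff_catH.mp hext
      rw [hP.2, hP.2]
      refine contProb_congr ?_
      intro j l' hpre hne
      refine hag j (catH h l') (ext_catH h l') ?_
      intro h''' hR3 hext3
      exact hsub h''' hR3 (ext_trans hext3 (hprefix_ext l' l hpre))
    · by_cases hext2 : Ext h₂ h
      · rw [P_cyl_prefix hP hext2, P_cyl_prefix hP hext2]
      · rw [P_cyl_incompat hP (by tauto), P_cyl_incompat hP (by tauto)]
  have hUmeas : MeasurableSet (⋃ h' ∈ R, cyl h') :=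
    MeasurableSet.biUnion (Set.to_countable R) fun h' _ => measurableSet_cyl h'
  refine measure_ext_cyl ?_ ?_
  · intro h₂
    rw [Measure.restrict_apply (measurableSet_cyl h₂),
      Measure.restrict_apply (measurableSet_cyl h₂)]
    by_cases hsub : ∃ h' ∈ R, Ext h' h₂
    · obtain ⟨h', hR', hext'⟩ := hsub
      have hempty : cyl h₂ ∩ (⋃ h' ∈ R, cyl h')ᶜ = ∅ := by
        rw [Set.eq_empty_iff_forall_notMem]
        rintro x ⟨hx2, hxc⟩
        exact hxc (Set.mem_biUnion hR' (cyl_mono hext' hx2))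
      rw [hempty]
      simp
    · push_neg at hsub
      rw [measure_inter_compl_eq hP h σ₁ R hRdis h₂ hsub,
        measure_inter_compl_eq hP h σ₂ R hRdis h₂ hsub, claim1 h₂ hsub]
      congr 1
      exact tsum_congr fun h' => claim2 h'.1 h'.2.1
  · rw [Measure.restrict_apply_univ, Measure.restrict_apply_univ,
      measure_compl hUmeas (measure_ne_top _ _), measure_compl hUmeas (measure_ne_top _ _),
      measure_univ, measure_univ]
    congr 1
    rw [Set.biUnion_eq_iUnion,
      MeasureTheory.measure_iUnion (pairwise_cyl_disjoint R hRdis)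
        (fun h' => measurableSet_cyl h'.1),
      MeasureTheory.measure_iUnion (pairwise_cyl_disjoint R hRdis)
        (fun h' => measurableSet_cyl h'.1)]
    exact tsum_congr fun h' => claim2 h'.1 h'.2

end Induced


lemma ext_antisymm {a b : G.History} (h1 : Ext a b) (h2 : Ext b a) : a = b :=
  Prod.ext h1.1 (h1.2.eq_of_length (le_antisymm h1.2.length_le h2.2.length_le))

lemma ext_snoc {m : G.History} {e : G.ActionProfile × G.S} :
    Ext m (m.1, m.2 ++ [e]) := ⟨rfl, e :: [], rfl⟩

lemma ext_snoc_strict {x m : G.History} {e : G.ActionProfile × G.S}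
    (h1 : Ext x (m.1, m.2 ++ [e])) (h2 : x ≠ (m.1, m.2 ++ [e])) : Ext x m := by
  refine ⟨h1.1, ?_⟩
  have hpre : x.2 <+: m.2 ++ [e] := h1.2
  have hlen := hpre.length_le
  simp only [List.length_append, List.length_singleton] at hlen
  rcases lt_or_eq_of_le hlen with hlt | heq
  · have hle : x.2.length ≤ m.2.length := by omega
    have h3 : x.2 = (m.2 ++ [e]).take x.2.length := List.prefix_iff_eq_take.mp hpre
    rw [List.take_append_of_le_length hle] at h3
    exact List.prefix_iff_eq_take.mpr h3
  · have h3 : x.2 = m.2 ++ [e] := hpre.eq_of_length (by simp [heq])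
    exact absurd (Prod.ext h1.1 h3) h2

section Base

variable (test : G.History → G.History → Prop)

noncomputable def baseAux (s : G.S) (l : List (G.ActionProfile × G.S)) :
    G.History × G.History :=
  l.foldl (fun p e =>
    ((if test p.1 (p.2.1, p.2.2 ++ [e]) then (p.2.1, p.2.2 ++ [e]) else p.1),
      (p.2.1, p.2.2 ++ [e]))) ((s, []), (s, []))

lemma baseAux_append (s : G.S) (l : List (G.ActionProfile × G.S))
    (e : G.ActionProfile × G.S) :
    baseAux test s (l ++ [e]) =
      ((if test (baseAux test s l).1 ((baseAux test s l).2.1, (baseAux test s l).2.2 ++ [e])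
        then ((baseAux test s l).2.1, (baseAux test s l).2.2 ++ [e])
        else (baseAux test s l).1),
        ((baseAux test s l).2.1, (baseAux test s l).2.2 ++ [e])) := by
  unfold baseAux
  rw [List.foldl_append]
  rfl

lemma baseAux_snd (s : G.S) (l : List (G.ActionProfile × G.S)) :
    (baseAux test s l).2 = (s, l) := by
  induction l using List.reverseRecOn with
  | nil => rfl
  | append_singleton l e ih => rw [baseAux_append, ih]

noncomputable def kbase (h : G.History) : G.History := (baseAux test h.1 h.2).1

lemma kbase_nil (s : G.S) : kbase test ((s, []) : G.History) = (s, []) := rfl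

lemma kbase_snoc (s : G.S) (l : List (G.ActionProfile × G.S)) (e : G.ActionProfile × G.S) :
    kbase test ((s, l ++ [e]) : G.History)
      = if test (kbase test (s, l)) (s, l ++ [e]) then ((s, l ++ [e]) : G.History)
        else kbase test (s, l) := by
  unfold kbase
  rw [baseAux_append, baseAux_snd]

lemma kbase_ext (h : G.History) : Ext (kbase test h) h := by
  obtain ⟨s, l⟩ := h
  induction l using List.reverseRecOn with
  | nil => exact ext_refl _
  | append_singleton l e ih =>
    rw [kbase_snoc]
    split
    · exact ext_refl _
    · exact ext_trans ih ⟨rfl, [e], rfl⟩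

lemma kbase_snoc' (m : G.History) (e : G.ActionProfile × G.S) :
    kbase test ((m.1, m.2 ++ [e]) : G.History)
      = if test (kbase test m) (m.1, m.2 ++ [e]) then ((m.1, m.2 ++ [e]) : G.History)
        else kbase test m := kbase_snoc test m.1 m.2 e

/-- The set of minimal reset points strictly after `h`. -/
def resetSet (h : G.History) : Set G.History :=
  {h' | ∃ m e, h' = (m.1, m.2 ++ [e]) ∧ Ext h m ∧ test (kbase test m) h' ∧
    ∀ m', Ext h m' → m' ≠ h → Ext m' m → kbase test m' ≠ m'}

lemma resetSet_ext {h h' : G.History} (hmem : h' ∈ resetSet test h) :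
    Ext h h' ∧ h' ≠ h := by
  obtain ⟨m, e, rfl, hhm, -, -⟩ := hmem
  refine ⟨ext_trans hhm ext_snoc, ?_⟩
  intro he
  have h1 : h.2.length ≤ m.2.length := hhm.2.length_le
  have h2 : (m.2 ++ [e]).length = h.2.length := by rw [← he]
  simp only [List.length_append, List.length_singleton] at h2
  omega

lemma resetSet_kbase {h h' : G.History} (hmem : h' ∈ resetSet test h) :
    kbase test h' = h' := by
  obtain ⟨m, e, rfl, -, ht, -⟩ := hmem
  rw [kbase_snoc', if_pos ht]

lemma resetSet_antichain {h : G.History} :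
    ∀ h₁ ∈ resetSet test h, ∀ h₂ ∈ resetSet test h, h₁ ≠ h₂ →
      ¬(Ext h₁ h₂ ∨ Ext h₂ h₁) := by
  have key : ∀ h₁ ∈ resetSet test h, ∀ h₂ ∈ resetSet test h, h₁ ≠ h₂ → ¬ Ext h₁ h₂ := by
    intro h₁ hm₁ h₂ hm₂ hne hext
    obtain ⟨m₂, e₂, rfl, hhm₂, -, hmin₂⟩ := hm₂
    have hext' : Ext h₁ m₂ := ext_snoc_strict hext hne
    obtain ⟨hext₁, hne₁⟩ := resetSet_ext test hm₁
    exact hmin₂ h₁ hext₁ hne₁ hext' (resetSet_kbase test hm₁)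
  intro h₁ hm₁ h₂ hm₂ hne
  rintro (hext | hext)
  · exact key h₁ hm₁ h₂ hm₂ hne hext
  · exact key h₂ hm₂ h₁ hm₁ (Ne.symm hne) hext

lemma catH_snoc_eq (h : G.History) (l : List (G.ActionProfile × G.S))
    (e : G.ActionProfile × G.S) :
    catH h (l ++ [e]) = (((catH h l).1, (catH h l).2 ++ [e]) : G.History) := by
  simp [catH]

lemma kbase_structure (h : G.History) (l : List (G.ActionProfile × G.S))
    (hno : ¬ ∃ h' ∈ resetSet test h, Ext h' (catH h l)) :
    kbase test (catH h l) = kbase test h ∧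
      ∀ m, Ext h m → m ≠ h → Ext m (catH h l) → kbase test m ≠ m := by
  induction l using List.reverseRecOn with
  | nil =>
    refine ⟨by rw [catH_nil], ?_⟩
    intro m hm hne hm'
    rw [catH_nil] at hm'
    exact absurd (ext_antisymm hm' hm) hne
  | append_singleton l e ih =>
    have hno' : ¬ ∃ h' ∈ resetSet test h, Ext h' (catH h l) := by
      rintro ⟨h', hmem, hext⟩
      exact hno ⟨h', hmem, ext_trans hext ⟨rfl, [e], (catH_snoc_eq h l e).symm ▸ rfl⟩⟩
    obtain ⟨Qa, Qb⟩ := ih hno'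
    have hsnoc : catH h (l ++ [e]) = (((catH h l).1, (catH h l).2 ++ [e]) : G.History) :=
      catH_snoc_eq h l e
    by_cases ht : test (kbase test (catH h l)) (catH h (l ++ [e]))
    · exfalso
      refine hno ⟨catH h (l ++ [e]), ⟨catH h l, e, hsnoc, ext_catH h l, ?_, ?_⟩, ext_refl _⟩
      · exact ht
      · exact Qb
    · have hkb : kbase test (catH h (l ++ [e])) = kbase test (catH h l) := by
        rw [hsnoc, kbase_snoc', if_neg (by rw [← hsnoc]; exact ht)]
      have hlen1 : (kbase test h).2.length ≤ h.2.length := (kbase_ext test h).2.length_le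
      have hlen2 : h.2.length ≤ (catH h l).2.length := (ext_catH h l).2.length_le
      refine ⟨by rw [hkb, Qa], ?_⟩
      intro m hm hne hm'
      by_cases hme : m = catH h (l ++ [e])
      · subst hme
        rw [hkb, Qa]
        intro hcontra
        have : (catH h (l ++ [e])).2.length = (catH h l).2.length + 1 := by
          rw [hsnoc]; simp
        have h4 : (kbase test h).2.length = (catH h (l ++ [e])).2.length := by rw [hcontra]
        omega
      · refine Qb m hm hne ?_
        rw [hsnoc] at hm'
        exact ext_snoc_strict hm' (by rwa [← hsnoc])

lemma kbase_eq_of_noReset (h : G.History) (l : List (G.ActionProfile × G.S))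
    (hno : ∀ m', Ext h m' → m' ≠ h → Ext m' (catH h l) → kbase test m' ≠ m') :
    kbase test (catH h l) = kbase test h := by
  induction l using List.reverseRecOn with
  | nil => rw [catH_nil]
  | append_singleton l e ih =>
    have hno' : ∀ m', Ext h m' → m' ≠ h → Ext m' (catH h l) → kbase test m' ≠ m' := by
      intro m' h1 h2 h3
      exact hno m' h1 h2 (ext_trans h3 ⟨rfl, [e], (catH_snoc_eq h l e).symm ▸ rfl⟩)
    have hIH := ih hno'
    have hsnoc := catH_snoc_eq h l e
    by_cases ht : test (kbase test (catH h l)) (catH h (l ++ [e]))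
    · exfalso
      have hself : kbase test (catH h (l ++ [e])) = catH h (l ++ [e]) := by
        rw [hsnoc, kbase_snoc', if_pos (by rw [← hsnoc]; exact ht)]
      refine hno (catH h (l ++ [e])) (ext_catH h (l ++ [e])) ?_ (ext_refl _) hself
      intro he
      have h1 : h.2.length ≤ (catH h l).2.length := (ext_catH h l).2.length_le
      have h2 : (catH h (l ++ [e])).2.length = (catH h l).2.length + 1 := by rw [hsnoc]; simp
      have h3 : (catH h (l ++ [e])).2.length = h.2.length :=
        congrArg (fun x : G.History => x.2.length) he
      omega
    · rw [hsnoc, kbase_snoc', if_neg (by rw [hsnoc] at ht; exact ht)]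
      exact hIH

lemma exists_of_kbase_ne (h : G.History) (hne : kbase test h ≠ h) :
    ∃ m e, h = ((m.1, m.2 ++ [e]) : G.History) ∧ kbase test m = kbase test h ∧
      ¬ test (kbase test m) h := by
  obtain ⟨s, l⟩ := h
  rcases l.eq_nil_or_concat with rfl | ⟨L, e, rfl⟩
  · exact absurd (kbase_nil test s) hne
  · rw [List.concat_eq_append] at hne ⊢
    rw [kbase_snoc] at hne ⊢
    by_cases ht : test (kbase test (s, L)) (s, L ++ [e])
    · rw [if_pos ht] at hne
      exact absurd rfl hne
    · rw [if_neg ht]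
      exact ⟨(s, L), e, rfl, rfl, ht⟩

end Base


lemma ext_comparable {a b c : G.History} (h1 : Ext a c) (h2 : Ext b c) :
    Ext a b ∨ Ext b a := by
  have key : ∀ x y : G.History, x.2.length ≤ y.2.length → Ext x c → Ext y c → Ext x y := by
    intro x y hlen hx hy
    refine ⟨hx.1.trans hy.1.symm, ?_⟩
    rw [List.prefix_iff_eq_take]
    have hx2 : x.2 = c.2.take x.2.length := List.prefix_iff_eq_take.mp hx.2
    have hy2 : y.2 = c.2.take y.2.length := List.prefix_iff_eq_take.mp hy.2
    rw [hy2, List.take_take, Nat.min_eq_left hlen]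
    exact hx2
  rcases le_total a.2.length b.2.length with hle | hle
  · exact Or.inl (key a b hle h1 h2)
  · exact Or.inr (key b a hle h2 h1)

end Aux
-- AUX END

/-- **Theorem (existence of subgame ε-maxmin strategies).**
In every stochastic game, for every `ε > 0`, every player `i` has a subgame `ε`-maxmin
strategy `σ*_i`: for every history `h` and every strategy profile `σ_{-i}` of the opponents,
`E_{h, σ*_i, σ_{-i}}[f_i] ≥ v̲_i(h) - ε`. -/
theorem exists_subgame_maxmin_strategy (G : StochGame)
    (P : G.History → G.Profile → Measure G.Run) (hP : IsInducedFamily G P)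
    (hfm : ∀ i, Measurable (G.payoff i))
    (hfb : ∀ i, ∃ C : ℝ, ∀ r : G.Run, |G.payoff i r| ≤ C)
    (ε : ℝ) (hε : 0 < ε) (i : G.I) :
    ∃ σstar : G.Strategy i, ∀ h : G.History, Valid h → ∀ σ : G.Profile,
      maxminVal P i h - ε ≤ expPay P h (Function.update σ i σstar) i := by
  classical
  obtain ⟨C, hC⟩ := hfb i
  have hδ4 : (0:ℝ) < ε/4 := by linarith
  have hsel : ∀ h : G.History, ∃ τ : G.Strategy i,
      maxminVal P i h - ε/4 < guar P i τ h := fun h => exists_guar_gt hδ4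
  choose τsel hτsel using hsel
  set tst : G.History → G.History → Prop :=
    fun g h' => guar P i (τsel g) h' < maxminVal P i h' - 3*ε/4 with htst
  set σstar : G.Strategy i := fun h'' => τsel (kbase tst h'') h'' with hσstar
  haveI hFixNe : Nonempty {h : G.History // kbase tst h = h} :=
    ⟨⟨(Classical.arbitrary G.S, []), kbase_nil tst _⟩⟩
  set β : ℝ := ⨅ h : {h : G.History // kbase tst h = h},
    (guar P i σstar h.1 - maxminVal P i h.1) with hβ
  have hβbdd : BddBelow (Set.range fun h : {h : G.History // kbase tst h = h} =>
      guar P i σstar h.1 - maxminVal P i h.1) := by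
    refine ⟨-C - C, ?_⟩
    rintro x ⟨hh, rfl⟩
    have h1 := (abs_le.mp (abs_guar_le hP hC σstar hh.1)).1
    have h2 := (abs_le.mp (abs_maxminVal_le hP hC hh.1)).2
    exact sub_le_sub h1 h2
  have hβle : ∀ hh : {h : G.History // kbase tst h = h},
      β ≤ guar P i σstar hh.1 - maxminVal P i hh.1 := fun hh => ciInf_le hβbdd hh
  have key : ∀ (h : G.History) (σ : G.Profile),
      guar P i (τsel (kbase tst h)) h + min 0 (β + ε/2)
        ≤ expPay P h (Function.update σ i σstar) i := by
    intro h σ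
    have hRext : ∀ h' ∈ resetSet tst h, Ext h h' :=
      fun h' hm => (resetSet_ext tst hm).1
    have hRdis : ∀ h₁ ∈ resetSet tst h, ∀ h₂ ∈ resetSet tst h, h₁ ≠ h₂ →
        ¬(Ext h₁ h₂ ∨ Ext h₂ h₁) := resetSet_antichain tst
    have hRfix : ∀ h' ∈ resetSet tst h, kbase tst h' = h' :=
      fun h' hm => resetSet_kbase tst hm
    have hRtst : ∀ h' ∈ resetSet tst h,
        guar P i (τsel (kbase tst h)) h' < maxminVal P i h' - 3*ε/4 := by
      intro h' hm
      obtain ⟨m, e, rfl, hhm, ht, hmin⟩ := hm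
      obtain ⟨l, rfl⟩ := ext_iff_catH.mp hhm
      have hkm : kbase tst (catH h l) = kbase tst h := kbase_eq_of_noReset tst h l hmin
      simp only [htst] at ht
      rwa [hkm] at ht
    set π₁ : G.Profile := Function.update σ i σstar with hπ₁
    have hpun : ∀ h' : G.History, ∃ σp : G.Profile,
        expPay P h' (Function.update σp i (τsel (kbase tst h))) i
          < guar P i (τsel (kbase tst h)) h' + ε/4 := by
      intro h'
      exact exists_expPay_lt (by linarith)
    choose pun hpun' using hpun
    set σhat : G.Profile := fun j h'' =>
      if hx : ∃ h' ∈ resetSet tst h, Ext h' h'' then pun (Classical.choose hx) j h''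
      else σ j h'' with hσhat
    set π₂ : G.Profile := Function.update σhat i (τsel (kbase tst h)) with hπ₂
    have hRuniq : ∀ (h'' h'₀ : G.History), h'₀ ∈ resetSet tst h → Ext h'₀ h'' →
        ∀ h' ∈ resetSet tst h, Ext h' h'' → h' = h'₀ := by
      intro h'' h'₀ hm₀ he₀ h' hm he
      by_contra hne
      exact hRdis h' hm h'₀ hm₀ hne (ext_comparable he he₀)
    have hzone : ∀ h'' : G.History, Ext h h'' → (∀ h' ∈ resetSet tst h, ¬ Ext h' h'') →
        kbase tst h'' = kbase tst h := by
      intro h'' hext hno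
      obtain ⟨l, rfl⟩ := ext_iff_catH.mp hext
      exact (kbase_structure tst h l (by rintro ⟨h', hm, hx⟩; exact hno h' hm hx)).1
    have hagN : ∀ (j : G.I) (h'' : G.History), Ext h h'' →
        (∀ h' ∈ resetSet tst h, ¬ Ext h' h'') → π₁ j h'' = π₂ j h'' := by
      intro j h'' hext hno
      by_cases hj : j = i
      · subst hj
        rw [hπ₁, hπ₂, Function.update_self, Function.update_self]
        simp only [hσstar]
        rw [hzone h'' hext hno]
      · rw [hπ₁, hπ₂, Function.update_of_ne hj, Function.update_of_ne hj]
        simp only [hσhat]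
        rw [dif_neg (by rintro ⟨h', hm, hx⟩; exact hno h' hm hx)]
    have hagR : ∀ h' ∈ resetSet tst h,
        P h' π₂ = P h' (Function.update (pun h') i (τsel (kbase tst h))) := by
      intro h' hm
      refine P_congr hP ?_
      intro j h'' hext
      by_cases hj : j = i
      · subst hj
        rw [hπ₂, Function.update_self, Function.update_self]
      · rw [hπ₂, Function.update_of_ne hj, Function.update_of_ne hj]
        simp only [hσhat]
        have hx : ∃ h0 ∈ resetSet tst h, Ext h0 h'' := ⟨h', hm, hext⟩
        rw [dif_pos hx]
        have heq := hRuniq h'' h' hm hext (Classical.choose hx)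
          (Classical.choose_spec hx).1 (Classical.choose_spec hx).2
        rw [heq]
    have hdec₁ := expPay_eq_decomp hP h π₁ (resetSet tst h) hRext hRdis (hfm i) hC
    have hdec₂ := expPay_eq_decomp hP h π₂ (resetSet tst h) hRext hRdis (hfm i) hC
    have hS₁ := (hasSum_decomp hP h π₁ (resetSet tst h) hRext hRdis (hfm i) hC).summable
    have hS₂ := (hasSum_decomp hP h π₂ (resetSet tst h) hRext hRdis (hfm i) hC).summable
    have hNeq : (∫ r in (⋃ h' ∈ resetSet tst h, cyl h')ᶜ, G.payoff i r ∂(P h π₁))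
        = ∫ r in (⋃ h' ∈ resetSet tst h, cyl h')ᶜ, G.payoff i r ∂(P h π₂) := by
      rw [restrict_compl_congr hP h (resetSet tst h) hRext hRdis hagN]
    have hweq : ∀ h' : {x // x ∈ resetSet tst h},
        contProb π₁ h (pathL h h'.1) = contProb π₂ h (pathL h h'.1) := by
      intro h'
      have hpath : catH h (pathL h h'.1) = h'.1 := catH_pathL (hRext h'.1 h'.2)
      refine contProb_congr ?_
      intro j l' hpre hne
      have hlen : (catH h l').2.length < h'.1.2.length := by
        have h1 := hpre.length_le
        have h2 : l'.length ≠ (pathL h h'.1).length := fun hel => hne (hpre.eq_of_length hel)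
        have h3 : h'.1.2.length = h.2.length + (pathL h h'.1).length :=
          (congrArg (fun x : G.History => x.2.length) hpath.symm).trans (by simp [catH])
        simp only [catH, List.length_append]
        omega
      refine hagN j (catH h l') (ext_catH h l') ?_
      intro h''' hm3 hext3
      have hext3' : Ext h''' h'.1 := by
        refine ext_trans hext3 ?_
        rw [← hpath]
        obtain ⟨t, ht⟩ := hpre
        exact ⟨rfl, t, by simp [catH, ← ht]⟩
      by_cases h3e : h''' = h'.1
      · have h4 := hext3.2.length_le
        rw [h3e] at h4
        omega
      · exact hRdis h''' hm3 h'.1 h'.2 h3e (Or.inl hext3')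
    simp only [← hweq] at hdec₂ hS₂
    have hW : Summable (fun h' : {x // x ∈ resetSet tst h} =>
        (contProb π₁ h (pathL h h'.1)).toReal) :=
      summable_weights hP h π₁ (resetSet tst h) hRext hRdis
    have hWle := tsum_weights_le_one hP h π₁ (resetSet tst h) hRext hRdis
    have hW0 : ∀ h' : {x // x ∈ resetSet tst h},
        0 ≤ (contProb π₁ h (pathL h h'.1)).toReal := fun _ => ENNReal.toReal_nonneg
    have hsummb : ∀ (u : {x // x ∈ resetSet tst h} → ℝ) (M : ℝ), (∀ x, |u x| ≤ M) →
        Summable (fun h' : {x // x ∈ resetSet tst h} =>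
          (contProb π₁ h (pathL h h'.1)).toReal * u h') := by
      intro u M hu
      refine Summable.of_abs ?_
      refine Summable.of_nonneg_of_le (fun x => abs_nonneg _) (fun x => ?_) (hW.mul_right M)
      rw [abs_mul, abs_of_nonneg (hW0 x)]
      exact mul_le_mul_of_nonneg_left (hu x) (hW0 x)
    have hsummv₁ : Summable (fun h' : {x // x ∈ resetSet tst h} =>
        (contProb π₁ h (pathL h h'.1)).toReal * (maxminVal P i h'.1 + β)) := by
      refine hsummb _ (C + |β|) fun x => ?_
      calc |maxminVal P i x.1 + β| ≤ |maxminVal P i x.1| + |β| := abs_add_le _ _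
        _ ≤ C + |β| := by linarith [abs_maxminVal_le hP hC (i := i) x.1]
    have hsummv₂ : Summable (fun h' : {x // x ∈ resetSet tst h} =>
        (contProb π₁ h (pathL h h'.1)).toReal * (maxminVal P i h'.1 - ε/2)) := by
      refine hsummb _ (C + ε/2) fun x => ?_
      calc |maxminVal P i x.1 - ε/2| ≤ |maxminVal P i x.1| + |ε/2| := abs_sub _ _
        _ ≤ C + ε/2 := by
          have := abs_maxminVal_le hP hC (i := i) x.1
          rw [abs_of_pos (by linarith : (0:ℝ) < ε/2)]
          linarith
    have hb₁ : ∀ h' : {x // x ∈ resetSet tst h},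
        maxminVal P i h'.1 + β ≤ expPay P h'.1 π₁ i := by
      intro h'
      have h1 : guar P i σstar h'.1 ≤ expPay P h'.1 π₁ i := by
        rw [hπ₁]
        exact guar_le_expPay hP hC σstar h'.1 σ
      have h2 := hβle ⟨h'.1, hRfix h'.1 h'.2⟩
      linarith
    have hb₂ : ∀ h' : {x // x ∈ resetSet tst h},
        expPay P h'.1 π₂ i ≤ maxminVal P i h'.1 - ε/2 := by
      intro h'
      have h1 : expPay P h'.1 π₂ i
          = expPay P h'.1 (Function.update (pun h'.1) i (τsel (kbase tst h))) i := by
        simp only [expPay]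
        rw [hagR h'.1 h'.2]
      have h2 := hpun' h'.1
      have h3 := hRtst h'.1 h'.2
      linarith
    have hT₁ : (∑' h' : {x // x ∈ resetSet tst h},
          (contProb π₁ h (pathL h h'.1)).toReal * (maxminVal P i h'.1 + β))
        ≤ ∑' h' : {x // x ∈ resetSet tst h},
          (contProb π₁ h (pathL h h'.1)).toReal * expPay P h'.1 π₁ i :=
      Summable.tsum_le_tsum (fun h' => mul_le_mul_of_nonneg_left (hb₁ h') (hW0 h')) hsummv₁ hS₁
    have hT₂ : (∑' h' : {x // x ∈ resetSet tst h},
          (contProb π₁ h (pathL h h'.1)).toReal * expPay P h'.1 π₂ i)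
        ≤ ∑' h' : {x // x ∈ resetSet tst h},
          (contProb π₁ h (pathL h h'.1)).toReal * (maxminVal P i h'.1 - ε/2) :=
      Summable.tsum_le_tsum (fun h' => mul_le_mul_of_nonneg_left (hb₂ h') (hW0 h')) hS₂ hsummv₂
    have hsplit : (∑' h' : {x // x ∈ resetSet tst h},
          (contProb π₁ h (pathL h h'.1)).toReal * (maxminVal P i h'.1 + β))
        = (∑' h' : {x // x ∈ resetSet tst h},
            (contProb π₁ h (pathL h h'.1)).toReal * (maxminVal P i h'.1 - ε/2))
          + (∑' h' : {x // x ∈ resetSet tst h},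
              (contProb π₁ h (pathL h h'.1)).toReal) * (β + ε/2) := by
      rw [← tsum_mul_right, ← Summable.tsum_add hsummv₂ (hW.mul_right _)]
      exact tsum_congr fun h' => by ring
    have hWnonneg : (0:ℝ) ≤ ∑' h' : {x // x ∈ resetSet tst h},
        (contProb π₁ h (pathL h h'.1)).toReal := tsum_nonneg hW0
    have hminW : min 0 (β + ε/2) ≤ (∑' h' : {x // x ∈ resetSet tst h},
        (contProb π₁ h (pathL h h'.1)).toReal) * (β + ε/2) :=
      min_le_mul_of_mem01 hWnonneg hWle
    have hE₂ : guar P i (τsel (kbase tst h)) h ≤ expPay P h π₂ i := by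
      rw [hπ₂]
      exact guar_le_expPay hP hC _ h σhat
    rw [hπ₁] at hdec₁
    rw [hdec₁]
    rw [hdec₂] at hE₂
    linarith [hNeq, hT₁, hT₂, hsplit, hminW, hE₂]
  have hβineq : -(ε/4) + min 0 (β + ε/2) ≤ β := by
    rw [hβ]
    refine le_ciInf fun hh => ?_
    have h1 : guar P i (τsel (kbase tst hh.1)) hh.1 + min 0 (β + ε/2)
        ≤ guar P i σstar hh.1 := le_guar fun σ => key hh.1 σ
    rw [hh.2] at h1
    have h2 := hτsel hh.1
    linarith
  have hge : 0 ≤ β + ε/2 := by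
    by_contra hlt
    push_neg at hlt
    rw [min_eq_right (le_of_lt hlt)] at hβineq
    linarith
  refine ⟨σstar, fun h _ σ => ?_⟩
  have hk := key h σ
  rw [min_eq_left hge] at hk
  have hγg : maxminVal P i h - 3*ε/4 ≤ guar P i (τsel (kbase tst h)) h := by
    by_cases hkb : kbase tst h = h
    · rw [hkb]
      have := hτsel h
      linarith
    · obtain ⟨m, e, heq, hkm, hnt⟩ := exists_of_kbase_ne tst h hkb
      simp only [htst] at hnt
      push_neg at hnt
      rwa [hkm] at hnt
  linarith

end StochGame
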